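/- If Z ~ N(θ, σ²), w = λ₁/(2k), k ∈ (0,1], then E[(Z − d_lava(Z))²] = −k²(w + θ)φ(w)σ² + k²(θ − w)φ(−w)σ² + (λ₁²/4)·P(|Z| > w) + k²(θ² + σ²)·P(|Z| < w), where d_lava(z) = (1−k)z + k·sign(z)·max(|z| − w, 0) and φ is the N(θ,σ²) density. -/

import Mathlib

open MeasureTheory ProbabilityTheory Real

set_option linter.unusedVariables false

lemma hasDerivAt_gaussianPDFReal (θ : ℝ) (v : NNReal) (hv : (v:ℝ) ≠ 0) (x : ℝ) :
    HasDerivAt (gaussianPDFReal θ v) (-(x - θ)/v * gaussianPDFReal θ v x) x := by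
  have h1 : HasDerivAt (fun x : ℝ => -(x - θ)^2/(2*(v:ℝ))) (-(x-θ)/v) x := by
    have h0 : HasDerivAt (fun x : ℝ => x - θ) 1 x := (hasDerivAt_id x).sub_const θ
    have h2 := ((h0.pow 2).neg).div_const (2*(v:ℝ))
    refine h2.congr_deriv ?_
    field_simp
    ring
  have h3 := (h1.exp).const_mul ((Real.sqrt (2 * π * v))⁻¹)
  refine h3.congr_deriv ?_
  simp only [gaussianPDFReal]
  ring

/-- `E[(Z − d_lava(Z))²]` for a Gaussian `Z ~ N(θ, σ²)`. -/
theorem gaussian_lava_residual_sq_moment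
    (θ σ lam1 k : ℝ) (hσ : 0 < σ) (hlam1 : 0 < lam1) (hk0 : 0 < k) (hk1 : k ≤ 1)
    (w : ℝ) (hw : w = lam1 / (2 * k)) :
    let v : NNReal := ⟨σ^2, by positivity⟩
    let μ := gaussianReal θ v
    let φ := gaussianPDFReal θ v
    let dlava : ℝ → ℝ := fun z =>
      (1 - k) * z + k * Real.sign z * max (|z| - w) 0
    (∫ z, (z - dlava z)^2 ∂μ) =
      -(k^2) * (w + θ) * φ w * σ^2 + k^2 * (θ - w) * φ (-w) * σ^2
      + (lam1^2 / 4) * (μ {z | |z| > w}).toReal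
      + k^2 * (θ^2 + σ^2) * (μ {z | |z| < w}).toReal := by
  intro v μ φ dlava
  have hv : (v:ℝ) = σ^2 := rfl
  have hvne' : (v:ℝ) ≠ 0 := by rw [hv]; positivity
  have hvne : v ≠ 0 := fun h => hvne' (by simp [h])
  have hw0 : 0 < w := by rw [hw]; positivity
  have hkw : k * w = lam1 / 2 := by rw [hw]; field_simp
  set S : Set ℝ := Set.Icc (-w) w with hSdef
  set T : Set ℝ := {z : ℝ | |z| > w} with hTdef
  have hS : MeasurableSet S := measurableSet_Icc
  have hT : MeasurableSet T := measurableSet_lt measurable_const continuous_abs.measurable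
  have hφc : Continuous φ := by
    rw [show φ = gaussianPDFReal θ v from rfl, gaussianPDFReal_def]
    fun_prop
  have hφnn : ∀ x, 0 ≤ φ x := gaussianPDFReal_nonneg θ v
  -- pointwise identity
  have hpt : ∀ z, (z - dlava z)^2
      = S.indicator (fun z => k^2*z^2) z + T.indicator (fun _ => lam1^2/4) z := by
    intro z
    by_cases h : |z| ≤ w
    · have h1 : max (|z| - w) 0 = 0 := max_eq_right (by linarith)
      have h2 : z ∈ S := abs_le.mp h
      have h3 : z ∉ T := not_lt.2 h
      rw [Set.indicator_of_mem h2, Set.indicator_of_notMem h3]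
      simp only [dlava, h1, mul_zero, add_zero]
      ring
    · push_neg at h
      have h1 : max (|z| - w) 0 = |z| - w := max_eq_left (by linarith)
      have h2 : z ∉ S := fun hz => absurd (abs_le.mpr hz) (not_le.2 h)
      have h3 : z ∈ T := h
      rw [Set.indicator_of_mem h3, Set.indicator_of_notMem h2]
      have hres : z - dlava z = Real.sign z * (k * w) := by
        rcases lt_trichotomy z 0 with hz | hz | hz
        · simp only [dlava]; rw [h1, Real.sign_of_neg hz, abs_of_neg hz]; ring
        · exfalso; rw [hz] at h; simp at h; linarith
        · simp only [dlava]; rw [h1, Real.sign_of_pos hz, abs_of_pos hz]; ring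
      rw [hres, hkw, mul_pow]
      rcases lt_trichotomy z 0 with hz | hz | hz
      · rw [Real.sign_of_neg hz]; ring
      · exfalso; rw [hz] at h; simp at h; linarith
      · rw [Real.sign_of_pos hz]; ring
  have hint1 : Integrable (S.indicator fun z => k^2*z^2) μ := by
    refine Integrable.mono' (integrable_const (k^2*w^2))
      (((continuous_const.mul (continuous_pow 2)).stronglyMeasurable.indicator hS).aestronglyMeasurable)
      (ae_of_all _ fun z => ?_)
    by_cases h : z ∈ S
    · rw [Set.indicator_of_mem h, Real.norm_eq_abs, abs_of_nonneg (by positivity)]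
      obtain ⟨h1, h2⟩ := h
      exact mul_le_mul_of_nonneg_left (sq_le_sq' h1 h2) (by positivity)
    · rw [Set.indicator_of_notMem h]
      simp
      positivity
  have hint2 : Integrable (T.indicator fun _ : ℝ => lam1^2/4) μ :=
    (integrable_const _).indicator hT
  have hμdef : μ = volume.withDensity (gaussianPDF θ v) := gaussianReal_of_var_ne_zero θ hvne
  -- set integral against density
  have hset : ∫ z in S, k^2*z^2 ∂μ = ∫ x in S, (k^2*x^2) * φ x := by
    rw [hμdef, restrict_withDensity hS]
    have hpdf : gaussianPDF θ v = fun x => ((Real.toNNReal (φ x) : NNReal) : ENNReal) := rfl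
    rw [hpdf, integral_withDensity_eq_integral_smul
      ((measurable_gaussianPDFReal θ v).real_toNNReal)]
    congr 1
    ext x
    rw [NNReal.smul_def, Real.coe_toNNReal _ (hφnn x), smul_eq_mul]
    ring
  have hle : -w ≤ w := by linarith
  have hIcc : ∀ g : ℝ → ℝ, ∫ x in S, g x = ∫ x in (-w)..w, g x := by
    intro g
    rw [hSdef, integral_Icc_eq_integral_Ioc, intervalIntegral.integral_of_le hle]
  -- FTC
  have hderiv : ∀ x ∈ Set.uIcc (-w) w,
      HasDerivAt (fun z => -σ^2*(z+θ)*φ z) ((x^2 - (θ^2+σ^2)) * φ x) x := by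
    intro x _
    have h1 := hasDerivAt_gaussianPDFReal θ v hvne' x
    have h2 : HasDerivAt (fun z : ℝ => -σ^2*(z+θ)) (-σ^2) x := by
      simpa using ((hasDerivAt_id x).add_const θ).const_mul (-σ^2)
    have h3 := h2.mul h1
    refine h3.congr_deriv ?_
    rw [hv]
    have hσ2 : σ^2 ≠ 0 := by positivity
    field_simp
    ring
  have hFTC : ∫ x in (-w)..w, (x^2 - (θ^2+σ^2)) * φ x
      = (-σ^2*(w+θ)*φ w) - (-σ^2*((-w)+θ)*φ (-w)) :=
    intervalIntegral.integral_eq_sub_of_hasDerivAt hderiv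
      ((((continuous_pow 2).sub continuous_const).mul hφc).intervalIntegrable _ _)
  -- split quadratic integral
  have hii : ∀ g : ℝ → ℝ, Continuous g → IntervalIntegrable g volume (-w) w :=
    fun g hg => hg.intervalIntegrable _ _
  have hsplit : ∫ x in (-w)..w, (k^2*x^2) * φ x
      = k^2 * ((∫ x in (-w)..w, (x^2 - (θ^2+σ^2))*φ x)
          + (θ^2+σ^2) * ∫ x in (-w)..w, φ x) := by
    have he : ∀ x : ℝ, (k^2*x^2) * φ x
        = k^2 * ((x^2-(θ^2+σ^2))*φ x) + (k^2*(θ^2+σ^2)) * φ x := fun x => by ring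
    simp_rw [he]
    rw [intervalIntegral.integral_add
        ((hii (fun x => (x^2 - (θ^2+σ^2))*φ x) (((continuous_pow 2).sub continuous_const).mul hφc)).const_mul _)
        ((hii _ hφc).const_mul _),
      intervalIntegral.integral_const_mul, intervalIntegral.integral_const_mul]
    ring
  -- probability of the middle set
  have hP : (μ {z : ℝ | |z| < w}).toReal = ∫ x in (-w)..w, φ x := by
    have hSet : {z : ℝ | |z| < w} = Set.Ioo (-w) w := by
      ext z; simp only [Set.mem_setOf_eq, Set.mem_Ioo]; exact abs_lt
    rw [hSet, show μ = gaussianReal θ v from rfl, gaussianReal_apply_eq_integral θ hvne,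
      ENNReal.toReal_ofReal (setIntegral_nonneg measurableSet_Ioo fun x _ => hφnn x),
      intervalIntegral.integral_of_le hle, integral_Ioc_eq_integral_Ioo]
  -- assemble
  calc ∫ z, (z - dlava z)^2 ∂μ
      = ∫ z, (S.indicator (fun z => k^2*z^2) z + T.indicator (fun _ => lam1^2/4) z) ∂μ := by
        exact integral_congr_ae (ae_of_all _ hpt)
    _ = (∫ z, S.indicator (fun z => k^2*z^2) z ∂μ)
        + ∫ z, T.indicator (fun _ => lam1^2/4) z ∂μ := integral_add hint1 hint2
    _ = (∫ z in S, k^2*z^2 ∂μ) + (μ T).toReal * (lam1^2/4) := by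
        rw [integral_indicator hS, integral_indicator_const _ hT, smul_eq_mul]
        rfl
    _ = _ := by
        rw [hset, hIcc, hsplit, hFTC, ← hP]
        ring
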